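/- For any evaluation context σ (a finite map from variables x_1,...,x_n to untagged values) and any untagged value v, the set ℓ(w(σ, v)) equals exactly the set of linear expressions that evaluate to v in the context σ, where w(σ, c(v_1,...,v_k)) is the tagged tree c^{{∘} ∪ {i | σ(x_i) = c(v_1,...,v_k)}}(w(σ,v_1), ..., w(σ,v_k)). -/
import Mathlib


/-- Linear expressions over `n` variables: trees built from variables `x i` and
constructor applications `c(e₁,...,e_k)` (constructors named by naturals). -/
inductive LinExpr (n : ℕ) : Type
  | var : Fin n → LinExpr n
  | cons : ℕ → List (LinExpr n) → LinExpr n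

/-- Tagged trees (ℓ-values): each node carries a constructor symbol and a tag,
a finite subset of `{∘, 1, ..., n}` modelled as `Finset (Option (Fin n))`
(`none` playing the role of `∘`). -/
inductive TaggedTree (n : ℕ) : Type
  | node : ℕ → Finset (Option (Fin n)) → List (TaggedTree n) → TaggedTree n

/-- Membership in the set `ℓ(w)` of linear expressions extracted from a tagged tree:
`ℓ(c^A(w₁,...,w_k)) = {x i | i ∈ A} ∪ ({c(e₁,...,e_k) | e_i ∈ ℓ(w_i)} if ∘ ∈ A else ∅)`. -/
inductive EllMem {n : ℕ} : LinExpr n → TaggedTree n → Prop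
  | var {i : Fin n} {c A ws} (hi : some i ∈ A) :
      EllMem (.var i) (.node c A ws)
  | cons {c A ws es} (hc : none ∈ A) (hes : List.Forall₂ EllMem es ws) :
      EllMem (.cons c es) (.node c A ws)

/-- The set `ℓ(w)` of linear expressions extracted from a tagged tree `w`. -/
def ell {n : ℕ} (w : TaggedTree n) : Set (LinExpr n) := {e | EllMem e w}
/-- Untagged values: finite trees of constructor applications. -/
inductive UVal : Type
  | node : ℕ → List UVal → UVal

mutual
/-- Evaluation of a linear expression in a context `σ` assigning values to variables:
each variable `x i` is replaced by `σ i`. -/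
def evalLin {n : ℕ} (σ : Fin n → UVal) : LinExpr n → UVal
  | .var i => σ i
  | .cons c es => .node c (evalLinList σ es)

/-- Pointwise evaluation of a list of linear expressions (i.e. `List.map (evalLin σ)`). -/
def evalLinList {n : ℕ} (σ : Fin n → UVal) : List (LinExpr n) → List UVal
  | [] => []
  | e :: es => evalLin σ e :: evalLinList σ es
end

mutual
/-- The tagging function `w(σ, v)`: the node `c(v₁,...,v_k)` receives the tag
`{∘} ∪ {i | σ(x i) = c(v₁,...,v_k)}` and the children are tagged recursively. -/
noncomputable def wTag {n : ℕ} (σ : Fin n → UVal) : UVal → TaggedTree n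
  | .node c vs =>
      .node c
        (open scoped Classical in
          insert none ((Finset.univ.filter (fun i : Fin n => σ i = UVal.node c vs)).image some))
        (wTagList σ vs)

/-- Pointwise tagging of a list of values (i.e. `List.map (wTag σ)`). -/
noncomputable def wTagList {n : ℕ} (σ : Fin n → UVal) : List UVal → List (TaggedTree n)
  | [] => []
  | v :: vs => wTag σ v :: wTagList σ vs
end

mutual
theorem mem_wTag {n : ℕ} (σ : Fin n → UVal) (v : UVal) (e : LinExpr n) :
    EllMem e (wTag σ v) ↔ evalLin σ e = v := by
  obtain ⟨c, vs⟩ := v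
  constructor
  · intro h
    cases h with
    | var hi =>
      simp [wTag] at hi
      simpa [evalLin] using hi
    | cons hc hes =>
      simp only [evalLin, UVal.node.injEq, true_and]
      exact (mem_wTagList σ vs _).mp hes
  · intro h
    cases e with
    | var i =>
      exact .var (by classical simp [wTag]; simpa [evalLin] using h)
    | cons c' es =>
      simp only [evalLin, UVal.node.injEq] at h
      obtain ⟨rfl, hes⟩ := h
      exact .cons (by classical simp [wTag]) ((mem_wTagList σ vs es).mpr hes)
termination_by sizeOf v

theorem mem_wTagList {n : ℕ} (σ : Fin n → UVal) (vs : List UVal) (es : List (LinExpr n)) :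
    List.Forall₂ EllMem es (wTagList σ vs) ↔ evalLinList σ es = vs := by
  cases vs with
  | nil =>
    cases es with
    | nil => simp [wTagList, evalLinList]
    | cons e es => simp [wTagList, evalLinList]
  | cons v vs =>
    cases es with
    | nil => simp [wTagList, evalLinList]
    | cons e es =>
      simp only [wTagList, evalLinList, List.forall₂_cons, List.cons.injEq]
      exact and_congr (mem_wTag σ v e) (mem_wTagList σ vs es)
termination_by sizeOf vs
end

/-- For any evaluation context `σ` and any untagged value `v`, the set `ℓ(w(σ, v))`
is exactly the set of linear expressions that evaluate to `v` in the context `σ`. -/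
theorem ell_wTag {n : ℕ} (σ : Fin n → UVal) (v : UVal) :
    ell (wTag σ v) = {e : LinExpr n | evalLin σ e = v} := by
  ext e
  exact mem_wTag σ v e
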